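/- Suppose ‖g − ∇φ(x)‖ ≤ κ α ‖g‖ for some κ > 0, and suppose 0 < α ≤ 2(1 − θ)σ_lb / ((2κ + L σ_ub) σ_ub) for some θ ∈ (0,1). Then φ(x − α d) ≤ φ(x) − α θ ⟨d, g⟩, where d := B⁻¹g. -/

import Mathlib

open scoped RealInnerProductSpace
open Matrix

lemma descent_lemma {m : ℕ} (φ : EuclideanSpace ℝ (Fin m) → ℝ) (hφ : ContDiff ℝ 1 φ)
    (L : ℝ)
    (hlip : ∀ a b, ‖gradient φ a - gradient φ b‖ ≤ L * ‖a - b‖)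
    (x v : EuclideanSpace ℝ (Fin m)) :
    φ (x + v) ≤ φ x + ⟪gradient φ x, v⟫ + L / 2 * ‖v‖ ^ 2 := by
  have hdiff : Differentiable ℝ φ := hφ.differentiable one_ne_zero
  have hgrad : ∀ p : EuclideanSpace ℝ (Fin m), HasGradientAt φ (gradient φ p) p :=
    fun p => (hdiff p).hasGradientAt
  have hψ : ∀ t : ℝ, HasDerivAt (fun t : ℝ => φ (x + t • v))
      ⟪gradient φ (x + t • v), v⟫ t := by
    intro t
    have hc : HasDerivAt (fun t : ℝ => x + t • v) v t := by
      simpa using ((hasDerivAt_id t).smul_const v).const_add x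
    have hf := (hgrad (x + t • v)).hasFDerivAt
    have := hf.comp_hasDerivAt t hc
    simpa only [Function.comp_def, InnerProductSpace.toDual_apply_apply] using this
  set c : ℝ := ⟪gradient φ x, v⟫ with hc
  set F : ℝ → ℝ := fun t => φ (x + t • v) - t * c - L / 2 * ‖v‖ ^ 2 * t ^ 2 with hF
  have hF' : ∀ t : ℝ, HasDerivAt F
      (⟪gradient φ (x + t • v), v⟫ - c - L * ‖v‖ ^ 2 * t) t := by
    intro t
    have h1 := hψ t
    have h2 : HasDerivAt (fun t : ℝ => t * c) c t := hasDerivAt_mul_const c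
    have h3 : HasDerivAt (fun t : ℝ => L / 2 * ‖v‖ ^ 2 * t ^ 2)
        (L / 2 * ‖v‖ ^ 2 * (2 * t)) t := by
      simpa using (hasDerivAt_pow 2 t).const_mul (L / 2 * ‖v‖ ^ 2)
    have := (h1.sub h2).sub h3
    refine this.congr_deriv ?_
    ring
  have hanti : AntitoneOn F (Set.Icc (0:ℝ) 1) := by
    apply antitoneOn_of_deriv_nonpos (convex_Icc 0 1)
    · exact fun t _ => ((hF' t).continuousAt).continuousWithinAt
    · exact fun t _ => ((hF' t).differentiableAt).differentiableWithinAt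
    · intro t ht
      rw [interior_Icc] at ht
      rw [(hF' t).deriv]
      have hsub : ⟪gradient φ (x + t • v), v⟫ - c
          = ⟪gradient φ (x + t • v) - gradient φ x, v⟫ := by
        rw [inner_sub_left]
      have h4 : ⟪gradient φ (x + t • v) - gradient φ x, v⟫ ≤
          ‖gradient φ (x + t • v) - gradient φ x‖ * ‖v‖ := real_inner_le_norm _ _
      have h5 : ‖gradient φ (x + t • v) - gradient φ x‖ ≤ L * (t * ‖v‖) := by
        have := hlip (x + t • v) x
        simpa [norm_smul, abs_of_pos ht.1, mul_assoc] using this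
      have h6 : ‖gradient φ (x + t • v) - gradient φ x‖ * ‖v‖ ≤ L * (t * ‖v‖) * ‖v‖ :=
        mul_le_mul_of_nonneg_right h5 (norm_nonneg v)
      nlinarith [norm_nonneg v]
  have := hanti (Set.mem_Icc.mpr ⟨le_refl 0, zero_le_one⟩)
      (Set.mem_Icc.mpr ⟨zero_le_one, le_refl 1⟩) zero_le_one
  simp only [hF, one_smul, zero_smul, add_zero, one_pow, mul_one, one_mul,
    zero_pow, mul_zero, zero_mul, sub_zero] at this
  linarith

lemma inv_apply_eigenbasis {m : ℕ} (B : Matrix (Fin m) (Fin m) ℝ)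
    (hB : B.IsHermitian) (hPD : B.PosDef) (j : Fin m) :
    Matrix.toEuclideanLin B⁻¹ (hB.eigenvectorBasis j)
      = (hB.eigenvalues j)⁻¹ • hB.eigenvectorBasis j := by
  have hdet : IsUnit B.det := isUnit_iff_ne_zero.mpr hPD.det_pos.ne'
  have hlam : hB.eigenvalues j ≠ 0 := (hPD.eigenvalues_pos j).ne'
  have h1 := hB.mulVec_eigenvectorBasis j
  have h2 : B⁻¹ *ᵥ (B *ᵥ (WithLp.equiv 2 ((i : Fin m) → ℝ)) (hB.eigenvectorBasis j))
      = (WithLp.equiv 2 ((i : Fin m) → ℝ)) (hB.eigenvectorBasis j) := by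
    rw [mulVec_mulVec, Matrix.nonsing_inv_mul B hdet, one_mulVec]
  rw [show (WithLp.equiv 2 (Fin m → ℝ)) (hB.eigenvectorBasis j) = (hB.eigenvectorBasis j).ofLp from rfl, h1, mulVec_smul] at h2
  have h3 := congrArg (fun w => (hB.eigenvalues j)⁻¹ • w) h2
  simp only [smul_smul, inv_mul_cancel₀ hlam, one_smul] at h3
  apply PiLp.ext
  intro i
  have := congrFun h3 i
  simpa [Matrix.toEuclideanLin_apply] using this

lemma spectral_bounds {m : ℕ} (B : Matrix (Fin m) (Fin m) ℝ)
    (hB : B.IsHermitian) (hPD : B.PosDef)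
    (σlbB σubB : ℝ) (h0 : 0 < σlbB)
    (heig : ∀ i, σlbB ≤ hB.eigenvalues i ∧ hB.eigenvalues i ≤ σubB)
    (g : EuclideanSpace ℝ (Fin m)) :
    (1 / σubB) * ‖g‖ ^ 2 ≤ ⟪Matrix.toEuclideanLin B⁻¹ g, g⟫ ∧
      ‖Matrix.toEuclideanLin B⁻¹ g‖ ≤ (1 / σlbB) * ‖g‖ := by
  set b := hB.eigenvectorBasis with hb
  have horth := orthonormal_iff_ite.mp b.orthonormal
  have hlampos : ∀ i, 0 < hB.eigenvalues i := hPD.eigenvalues_pos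
  have hinner : ∀ a e : Fin m → ℝ,
      ⟪∑ j, a j • b j, ∑ i, e i • b i⟫ = ∑ i, a i * e i := by
    intro a e
    rw [sum_inner]
    simp_rw [inner_sum, real_inner_smul_left, real_inner_smul_right, horth,
      mul_ite, mul_one, mul_zero, Finset.sum_ite_eq, Finset.mem_univ, if_true]
  set c : Fin m → ℝ := fun i => b.repr g i with hcdef
  have hg : ∑ i, c i • b i = g := b.sum_repr g
  have hd : Matrix.toEuclideanLin B⁻¹ g = ∑ i, ((hB.eigenvalues i)⁻¹ * c i) • b i := by
    conv_lhs => rw [← hg]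
    rw [map_sum]
    refine Finset.sum_congr rfl fun i _ => ?_
    rw [_root_.map_smul, inv_apply_eigenbasis B hB hPD i, smul_smul, mul_comm]
  have hP : ⟪Matrix.toEuclideanLin B⁻¹ g, g⟫
      = ∑ i, (hB.eigenvalues i)⁻¹ * c i * c i := by
    conv_lhs => rw [hd, ← hg]
    rw [hinner]
  have hG : ‖g‖ ^ 2 = ∑ i, c i * c i := by
    rw [← real_inner_self_eq_norm_sq]
    conv_lhs => rw [← hg]
    rw [hinner]
  have hD : ‖Matrix.toEuclideanLin B⁻¹ g‖ ^ 2
      = ∑ i, ((hB.eigenvalues i)⁻¹ * c i) * ((hB.eigenvalues i)⁻¹ * c i) := by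
    rw [← real_inner_self_eq_norm_sq]
    conv_lhs => rw [hd]
    rw [hinner]
  constructor
  · rw [hP, hG, Finset.mul_sum]
    apply Finset.sum_le_sum
    intro i _
    have h1 : 1 / σubB ≤ 1 / hB.eigenvalues i :=
      one_div_le_one_div_of_le (hlampos i) (heig i).2
    have h2 : (0:ℝ) ≤ c i * c i := mul_self_nonneg _
    have : (hB.eigenvalues i)⁻¹ = 1 / hB.eigenvalues i := (one_div _).symm
    nlinarith
  · have hsq : ‖Matrix.toEuclideanLin B⁻¹ g‖ ^ 2 ≤ ((1 / σlbB) * ‖g‖) ^ 2 := by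
      rw [hD, mul_pow, hG, Finset.mul_sum]
      apply Finset.sum_le_sum
      intro i _
      have h1 : 1 / hB.eigenvalues i ≤ 1 / σlbB :=
        one_div_le_one_div_of_le h0 (heig i).1
      have h2 : (0:ℝ) < (hB.eigenvalues i)⁻¹ := inv_pos.mpr (hlampos i)
      have h3 : (hB.eigenvalues i)⁻¹ ≤ 1 / σlbB := by simp only [one_div] at h1 ⊢; exact h1
      have h4 : (hB.eigenvalues i)⁻¹ * (hB.eigenvalues i)⁻¹ ≤ (1 / σlbB) * (1 / σlbB) :=
        mul_self_le_mul_self h2.le h3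
      nlinarith [mul_self_nonneg (c i)]
    have h4 := Real.sqrt_le_sqrt hsq
    rwa [Real.sqrt_sq (norm_nonneg _), Real.sqrt_sq (by positivity)] at h4

lemma arith_lemma {pxv px G D P I L κ θ α σlb σub : ℝ}
    (hL : 0 < L) (hκ : 0 < κ) (hθ0 : 0 < θ) (hθ1 : θ < 1) (hα : 0 < α)
    (hσlb : 0 < σlb) (hσub : 0 < σub) (hG : 0 ≤ G) (hD : 0 ≤ D)
    (hdesc : pxv ≤ px + -(α * I) + L / 2 * (α * D) ^ 2)
    (h9 : P - κ * α * G * D ≤ I)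
    (hDub : D ≤ σub * G) (hPlb : σlb * G ^ 2 ≤ P)
    (hαkey : α * ((2 * κ + L * σub) * σub) ≤ 2 * (1 - θ) * σlb) :
    pxv ≤ px - α * θ * P := by
  have c1 : κ * α ^ 2 * G * D ≤ κ * α ^ 2 * G * (σub * G) :=
    mul_le_mul_of_nonneg_left hDub (by positivity)
  have c2 : D ^ 2 ≤ (σub * G) ^ 2 := by
    nlinarith [mul_self_le_mul_self hD hDub]
  have c2' : L / 2 * α ^ 2 * D ^ 2 ≤ L / 2 * α ^ 2 * (σub * G) ^ 2 :=
    mul_le_mul_of_nonneg_left c2 (by positivity)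
  have c3 : α * ((2 * κ + L * σub) * σub) * G ^ 2 ≤ 2 * (1 - θ) * σlb * G ^ 2 :=
    mul_le_mul_of_nonneg_right hαkey (sq_nonneg G)
  have c3' : α / 2 * (α * ((2 * κ + L * σub) * σub) * G ^ 2)
      ≤ α / 2 * (2 * (1 - θ) * σlb * G ^ 2) :=
    mul_le_mul_of_nonneg_left c3 (by positivity)
  have c4 : α * ((1 - θ) * (σlb * G ^ 2)) ≤ α * ((1 - θ) * P) :=
    mul_le_mul_of_nonneg_left
      (mul_le_mul_of_nonneg_left hPlb (by linarith)) hα.le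
  have h10 : α * (P - κ * α * G * D) ≤ α * I := mul_le_mul_of_nonneg_left h9 hα.le
  nlinarith [hdesc, h10, c1, c2', c3', c4]

/-- If `‖g − ∇φ(x)‖ ≤ κ α ‖g‖` and
`0 < α ≤ 2(1 − θ)σlb / ((2κ + L σub) σub)`, then
`φ(x − α d) ≤ φ(x) − α θ ⟨d, g⟩` where `d := B⁻¹ g`. -/
theorem stmt3 {n : ℕ} (hn : 1 ≤ n)
    (φ : EuclideanSpace ℝ (Fin n) → ℝ) (hφ : ContDiff ℝ 1 φ)
    (L : ℝ) (hL : 0 < L)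
    (hlip : ∀ a b, ‖gradient φ a - gradient φ b‖ ≤ L * ‖a - b‖)
    (B : Matrix (Fin n) (Fin n) ℝ) (hB : B.IsHermitian) (hPD : B.PosDef)
    (σlbB σubB σlb σub : ℝ) (h0 : 0 < σlbB) (hord : σlbB ≤ σubB)
    (heig : ∀ i, σlbB ≤ hB.eigenvalues i ∧ hB.eigenvalues i ≤ σubB)
    (hσlb : σlb = 1 / σubB) (hσub : σub = 1 / σlbB)
    (x g : EuclideanSpace ℝ (Fin n))
    (κ : ℝ) (hκ : 0 < κ) (θ : ℝ) (hθ : θ ∈ Set.Ioo (0 : ℝ) 1)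
    (α : ℝ) (hα0 : 0 < α)
    (hg : ‖g - gradient φ x‖ ≤ κ * α * ‖g‖)
    (hαub : α ≤ 2 * (1 - θ) * σlb / ((2 * κ + L * σub) * σub)) :
    φ (x - α • Matrix.toEuclideanLin B⁻¹ g) ≤
      φ x - α * θ * ⟪Matrix.toEuclideanLin B⁻¹ g, g⟫ := by
  obtain ⟨hθ0, hθ1⟩ := hθ
  obtain ⟨hPlb, hDub⟩ := spectral_bounds B hB hPD σlbB σubB h0 heig g
  rw [← hσlb] at hPlb
  rw [← hσub] at hDub
  have hub0 : 0 < σubB := lt_of_lt_of_le h0 hord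
  have hσub0 : 0 < σub := by rw [hσub]; positivity
  have hσlb0 : 0 < σlb := by rw [hσlb]; positivity
  have hdenom : 0 < (2 * κ + L * σub) * σub := by positivity
  have hαkey : α * ((2 * κ + L * σub) * σub) ≤ 2 * (1 - θ) * σlb := by
    rw [le_div_iff₀ hdenom] at hαub
    exact hαub
  have hdesc := descent_lemma φ hφ L hlip x (-(α • Matrix.toEuclideanLin B⁻¹ g))
  have hxv : x + -(α • Matrix.toEuclideanLin B⁻¹ g)
      = x - α • Matrix.toEuclideanLin B⁻¹ g := by rw [← sub_eq_add_neg]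
  rw [hxv] at hdesc
  have hnorm : ‖-(α • Matrix.toEuclideanLin B⁻¹ g)‖
      = α * ‖Matrix.toEuclideanLin B⁻¹ g‖ := by
    rw [norm_neg, norm_smul, Real.norm_eq_abs, abs_of_pos hα0]
  have hinner1 : ⟪gradient φ x, -(α • Matrix.toEuclideanLin B⁻¹ g)⟫
      = -(α * ⟪gradient φ x, Matrix.toEuclideanLin B⁻¹ g⟫) := by
    rw [inner_neg_right, real_inner_smul_right]
  rw [hnorm, hinner1] at hdesc
  have h7 : ⟪g - gradient φ x, Matrix.toEuclideanLin B⁻¹ g⟫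
      ≤ κ * α * ‖g‖ * ‖Matrix.toEuclideanLin B⁻¹ g‖ :=
    le_trans (real_inner_le_norm _ _) (mul_le_mul_of_nonneg_right hg (norm_nonneg _))
  have h8 : ⟪g - gradient φ x, Matrix.toEuclideanLin B⁻¹ g⟫
      = ⟪g, Matrix.toEuclideanLin B⁻¹ g⟫
        - ⟪gradient φ x, Matrix.toEuclideanLin B⁻¹ g⟫ := inner_sub_left _ _ _
  have hgd : ⟪Matrix.toEuclideanLin B⁻¹ g, g⟫ = ⟪g, Matrix.toEuclideanLin B⁻¹ g⟫ :=
    real_inner_comm _ _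
  have h9 : ⟪Matrix.toEuclideanLin B⁻¹ g, g⟫
      - κ * α * ‖g‖ * ‖Matrix.toEuclideanLin B⁻¹ g‖
      ≤ ⟪gradient φ x, Matrix.toEuclideanLin B⁻¹ g⟫ := by
    rw [hgd]; linarith
  exact arith_lemma hL hκ hθ0 hθ1 hα0 hσlb0 hσub0 (norm_nonneg g) (norm_nonneg _)
    hdesc h9 hDub hPlb hαkey
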